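/- arXiv:1301.5515 — 3 statements merged into one kernel-verified Lean document; each statement's English description precedes it below -/
import Mathlib

section
/- Let 0 < δ < 2 and let a, b ∈ ℝ³ with dist a b = δ. Then the Lebesgue volume of closedBall a 1 ∩ closedBall b 1 equals (4π/3)·(1 − (3/4)δ + (1/16)δ³). -/
open MeasureTheory Metric Real


lemma disc_area (R : ℝ) :
    volume {y : Fin 2 → ℝ | y 0 ^ 2 + y 1 ^ 2 ≤ R} = ENNReal.ofReal (π * R) := by
  rcases le_or_gt 0 R with hR | hR
  · have hpre : (MeasurableEquiv.toLp 2 (Fin 2 → ℝ)).symm ⁻¹' {y : Fin 2 → ℝ | y 0 ^ 2 + y 1 ^ 2 ≤ R}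
        = closedBall (0 : EuclideanSpace ℝ (Fin 2)) (Real.sqrt R) := by
      ext x
      simp only [Set.mem_preimage, Set.mem_setOf_eq, mem_closedBall, dist_zero_right,
        EuclideanSpace.norm_eq, Fin.sum_univ_two, Real.norm_eq_abs, sq_abs]
      exact (Real.sqrt_le_sqrt_iff hR).symm
    have hmeas : MeasurableSet {y : Fin 2 → ℝ | y 0 ^ 2 + y 1 ^ 2 ≤ R} :=
      measurableSet_le (by fun_prop) measurable_const
    rw [← (EuclideanSpace.volume_preserving_symm_measurableEquiv_toLp (Fin 2)).measure_preimage
      hmeas.nullMeasurableSet, hpre, EuclideanSpace.volume_closedBall]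
    have h2 : (Fintype.card (Fin 2) : ℕ) = 2 := by simp
    rw [h2]
    rw [Real.sq_sqrt pi_pos.le, show (2:ℕ)/(2:ℝ) + 1 = 2 by norm_num, Real.Gamma_two, div_one,
      ← ENNReal.ofReal_pow (Real.sqrt_nonneg R), Real.sq_sqrt hR, ← ENNReal.ofReal_mul hR,
      mul_comm]
  · have : {y : Fin 2 → ℝ | y 0 ^ 2 + y 1 ^ 2 ≤ R} = ∅ := by
      ext y; simp only [Set.mem_setOf_eq, Set.mem_empty_iff_false, iff_false, not_le]
      exact hR.trans_le (by positivity)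
    rw [this, measure_empty, Eq.comm, ENNReal.ofReal_eq_zero]
    exact mul_nonpos_of_nonneg_of_nonpos pi_pos.le hR.le


lemma ofReal_max0 (z : ℝ) : ENNReal.ofReal (max 0 z) = ENNReal.ofReal z := by
  rcases le_total 0 z with h | h
  · rw [max_eq_right h]
  · rw [max_eq_left h, ENNReal.ofReal_zero, Eq.comm, ENNReal.ofReal_eq_zero]; exact h

lemma intpoly (c a b : ℝ) :
    ∫ t in a..b, π * (1 - (t - c) ^ 2) =
      π * ((b - (b - c) ^ 3 / 3) - (a - (a - c) ^ 3 / 3)) := by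
  have hd : ∀ t ∈ Set.uIcc a b,
      HasDerivAt (fun t => π * (t - (t - c) ^ 3 / 3)) (π * (1 - (t - c) ^ 2)) t := by
    intro t _
    have hder : HasDerivAt (fun t : ℝ => t - c) 1 t := (hasDerivAt_id t).sub_const c
    have h3 := ((hasDerivAt_id t).sub ((hder.pow 3).div_const 3)).const_mul π
    exact h3.congr_deriv (by norm_num)
  rw [intervalIntegral.integral_eq_sub_of_hasDerivAt hd
    (Continuous.intervalIntegrable (by continuity) a b)]
  ring

lemma lens_lintegral (δ : ℝ) (hδ₀ : 0 < δ) (hδ₂ : δ < 2) :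
    (∫⁻ t : ℝ, ENNReal.ofReal (π * min (1 - t ^ 2) (1 - (t - δ) ^ 2))) =
      ENNReal.ofReal ((4 * π / 3) * (1 - (3 / 4) * δ + (1 / 16) * δ ^ 3)) := by
  set g : ℝ → ℝ := fun t => max 0 (π * min (1 - t ^ 2) (1 - (t - δ) ^ 2)) with hg
  have hgnn : ∀ t, 0 ≤ g t := fun t => le_max_left _ _
  have hgcont : Continuous g :=
    continuous_const.max (continuous_const.mul ((by continuity : Continuous fun t : ℝ =>
      1 - t ^ 2).min (by continuity)))
  have hvanish : ∀ t ∉ Set.Icc (δ - 1) 1, g t = 0 := by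
    intro t ht
    rw [Set.mem_Icc, not_and_or, not_le, not_le] at ht
    have hmin : min (1 - t ^ 2) (1 - (t - δ) ^ 2) ≤ 0 := by
      rcases ht with ht | ht
      · exact le_trans (min_le_right _ _) (by nlinarith)
      · exact le_trans (min_le_left _ _) (by nlinarith)
    exact max_eq_left (mul_nonpos_of_nonneg_of_nonpos pi_pos.le hmin)
  have hint : Integrable g :=
    hgcont.integrable_of_hasCompactSupport (HasCompactSupport.intro isCompact_Icc hvanish)
  have step1 : (∫⁻ t : ℝ, ENNReal.ofReal (π * min (1 - t ^ 2) (1 - (t - δ) ^ 2))) =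
      ∫⁻ t : ℝ, ENNReal.ofReal (g t) := by
    congr 1; funext t; rw [hg]; exact (ofReal_max0 _).symm
  rw [step1, ← ofReal_integral_eq_lintegral_ofReal hint (ae_of_all _ hgnn)]
  congr 1
  have h1 : (∫ t, g t) = ∫ t in Set.Icc (δ - 1) 1, g t :=
    (setIntegral_eq_integral_of_forall_compl_eq_zero hvanish).symm
  rw [h1, integral_Icc_eq_integral_Ioc, ← intervalIntegral.integral_of_le (by linarith : δ - 1 ≤ 1),
    ← intervalIntegral.integral_add_adjacent_intervals (b := δ / 2)
      (hgcont.intervalIntegrable _ _) (hgcont.intervalIntegrable _ _)]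
  have hp1 : (∫ t in (δ - 1)..(δ / 2), g t) = ∫ t in (δ - 1)..(δ / 2), π * (1 - (t - δ) ^ 2) := by
    apply intervalIntegral.integral_congr
    intro t ht
    rw [Set.uIcc_of_le (by linarith : δ - 1 ≤ δ / 2), Set.mem_Icc] at ht
    show max 0 (π * min (1 - t ^ 2) (1 - (t - δ) ^ 2)) = π * (1 - (t - δ) ^ 2)
    have e1 : min (1 - t ^ 2) (1 - (t - δ) ^ 2) = 1 - (t - δ) ^ 2 := min_eq_right (by nlinarith)
    rw [e1]
    exact max_eq_right (mul_nonneg pi_pos.le (by nlinarith))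
  have hp2 : (∫ t in (δ / 2)..1, g t) = ∫ t in (δ / 2)..1, π * (1 - (t - 0) ^ 2) := by
    apply intervalIntegral.integral_congr
    intro t ht
    rw [Set.uIcc_of_le (by linarith : δ / 2 ≤ 1), Set.mem_Icc] at ht
    show max 0 (π * min (1 - t ^ 2) (1 - (t - δ) ^ 2)) = π * (1 - (t - 0) ^ 2)
    rw [sub_zero]
    have e1 : min (1 - t ^ 2) (1 - (t - δ) ^ 2) = 1 - t ^ 2 := min_eq_left (by nlinarith)
    rw [e1]
    exact max_eq_right (mul_nonneg pi_pos.le (by nlinarith))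
  rw [hp1, hp2, intpoly, intpoly]
  ring


lemma sqrt_le_one_iff' (s : ℝ) : Real.sqrt s ≤ 1 ↔ s ≤ 1 := by
  rw [show (1:ℝ) = Real.sqrt 1 from Real.sqrt_one.symm, Real.sqrt_le_sqrt_iff zero_le_one,
    Real.sqrt_one]

lemma lens_centered (δ : ℝ) (hδ₀ : 0 < δ) (hδ₂ : δ < 2) :
    volume (closedBall (0 : EuclideanSpace ℝ (Fin 3)) 1 ∩
      closedBall (EuclideanSpace.single (0 : Fin 3) δ) 1) =
    ∫⁻ t : ℝ, ENNReal.ofReal (π * min (1 - t ^ 2) (1 - (t - δ) ^ 2)) := by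
  set A : Set (Fin 3 → ℝ) :=
    {x | x 0 ^ 2 + x 1 ^ 2 + x 2 ^ 2 ≤ 1 ∧ (x 0 - δ) ^ 2 + x 1 ^ 2 + x 2 ^ 2 ≤ 1} with hA
  set B : Set (ℝ × (Fin 2 → ℝ)) :=
    {p | p.1 ^ 2 + p.2 0 ^ 2 + p.2 1 ^ 2 ≤ 1 ∧ (p.1 - δ) ^ 2 + p.2 0 ^ 2 + p.2 1 ^ 2 ≤ 1} with hB
  have hm1 : Measurable fun p : ℝ × (Fin 2 → ℝ) => p.1 ^ 2 + p.2 0 ^ 2 + p.2 1 ^ 2 := by fun_prop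
  have hm2 : Measurable fun p : ℝ × (Fin 2 → ℝ) => (p.1 - δ) ^ 2 + p.2 0 ^ 2 + p.2 1 ^ 2 := by
    fun_prop
  have hBmeas : MeasurableSet B := by
    rw [hB, Set.setOf_and]
    exact (measurableSet_le hm1 measurable_const).inter (measurableSet_le hm2 measurable_const)
  have hm3 : Measurable fun x : Fin 3 → ℝ => x 0 ^ 2 + x 1 ^ 2 + x 2 ^ 2 := by fun_prop
  have hm4 : Measurable fun x : Fin 3 → ℝ => (x 0 - δ) ^ 2 + x 1 ^ 2 + x 2 ^ 2 := by fun_prop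
  have hAmeas : MeasurableSet A := by
    rw [hA, Set.setOf_and]
    exact (measurableSet_le hm3 measurable_const).inter (measurableSet_le hm4 measurable_const)
  have h1 : (MeasurableEquiv.toLp 2 (Fin 3 → ℝ)).symm ⁻¹' A =
      closedBall (0 : EuclideanSpace ℝ (Fin 3)) 1 ∩
        closedBall (EuclideanSpace.single (0 : Fin 3) δ) 1 := by
    ext x
    simp only [Set.mem_preimage, hA, Set.mem_setOf_eq, Set.mem_inter_iff, mem_closedBall,
      EuclideanSpace.dist_eq, Fin.sum_univ_three, Real.dist_eq, sq_abs,
      EuclideanSpace.single_apply, sqrt_le_one_iff', MeasurableEquiv.coe_toLp_symm]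
    norm_num [Fin.ext_iff]
  have h2 : (MeasurableEquiv.piFinSuccAbove (fun _ : Fin 3 => ℝ) 0) ⁻¹' B = A := by
    ext x
    simp only [Set.mem_preimage, hA, hB, Set.mem_setOf_eq,
      MeasurableEquiv.piFinSuccAbove_apply, Fin.insertNthEquiv_symm_apply, Fin.removeNth,
      Fin.succAbove_zero]
    have s0 : Fin.succ (0 : Fin 2) = 1 := by decide
    have s1 : Fin.succ (1 : Fin 2) = 2 := by decide
    rw [s0, s1]
  rw [← h1, (EuclideanSpace.volume_preserving_symm_measurableEquiv_toLp (Fin 3)).measure_preimage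
    hAmeas.nullMeasurableSet, ← h2,
    (volume_preserving_piFinSuccAbove (fun _ : Fin 3 => ℝ) 0).measure_preimage
      hBmeas.nullMeasurableSet, Measure.volume_eq_prod, Measure.prod_apply hBmeas]
  congr 1
  ext t
  have hsec : (Prod.mk t ⁻¹' B) =
      {y : Fin 2 → ℝ | y 0 ^ 2 + y 1 ^ 2 ≤ min (1 - t ^ 2) (1 - (t - δ) ^ 2)} := by
    ext y
    simp only [Set.mem_preimage, hB, Set.mem_setOf_eq, le_min_iff]
    constructor <;> intro h <;> constructor <;> linarith [h.1, h.2]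
  rw [hsec, disc_area]


lemma lens_reduce (δ : ℝ) (hδ₀ : 0 < δ) (hδ₂ : δ < 2)
    (a b : EuclideanSpace ℝ (Fin 3)) (h : dist a b = δ) :
    volume (closedBall a 1 ∩ closedBall b 1) =
      volume (closedBall (0 : EuclideanSpace ℝ (Fin 3)) 1 ∩
        closedBall (EuclideanSpace.single (0 : Fin 3) δ) 1) := by
  set v : EuclideanSpace ℝ (Fin 3) := EuclideanSpace.single (0 : Fin 3) δ with hvdef
  have hnorm : ‖b - a‖ = δ := by rw [← dist_eq_norm, dist_comm]; exact h
  have hv : ‖v‖ = δ := by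
    rw [hvdef, EuclideanSpace.norm_single, Real.norm_eq_abs, abs_of_pos hδ₀]
  set f := Submodule.reflection (ℝ ∙ ((b - a) - v))ᗮ with hfdef
  have hf : f (b - a) = v := Submodule.reflection_sub (by rw [hnorm, hv])
  have htrans : (fun x => x + a) ⁻¹' (closedBall a 1 ∩ closedBall b 1) =
      closedBall 0 1 ∩ closedBall (b - a) 1 := by
    ext x
    simp only [Set.mem_preimage, Set.mem_inter_iff, mem_closedBall, dist_eq_norm]
    rw [show x + a - a = x by abel, show x + a - b = x - (b - a) by abel, sub_zero]
  have hrefl : (⇑f) ⁻¹' (closedBall (0 : EuclideanSpace ℝ (Fin 3)) 1 ∩ closedBall v 1) =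
      closedBall 0 1 ∩ closedBall (b - a) 1 := by
    ext x
    simp only [Set.mem_preimage, Set.mem_inter_iff, mem_closedBall]
    rw [← hf, f.dist_map, show dist (f x) 0 = dist x 0 by
      rw [dist_zero_right, dist_zero_right, f.norm_map]]
  rw [← measure_preimage_add_right volume a _, htrans, ← hrefl,
    f.measurePreserving.measure_preimage
      (measurableSet_closedBall.inter measurableSet_closedBall).nullMeasurableSet]

theorem lens_volume_delta (δ : ℝ) (hδ₀ : 0 < δ) (hδ₂ : δ < 2)
    (a b : EuclideanSpace ℝ (Fin 3)) (h : dist a b = δ) :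
    volume (closedBall a 1 ∩ closedBall b 1) =
      ENNReal.ofReal ((4 * π / 3) * (1 - (3 / 4) * δ + (1 / 16) * δ ^ 3)) := by
  rw [lens_reduce δ hδ₀ hδ₂ a b h, lens_centered δ hδ₀ hδ₂, lens_lintegral δ hδ₀ hδ₂]
end

section
/- Let n ≥ 2, let 0 < φ < π/2, and let a, b ∈ ℝⁿ with dist a b = 2·cos φ. Then the Lebesgue volume of closedBall a 1 ∩ closedBall b 1 equals (π^{n/2}/Γ(1 + n/2)) · [1 − (2·Γ(1 + n/2)/(√π · Γ((n+1)/2))) · ∫₀^{cos φ} (1 − t²)^{(n−1)/2} dt]. (Equivalently, the bracketed subtrahend is (2Γ(1+n/2)/(√π Γ((n+1)/2))) · ₂F₁(1/2, (1−n)/2; 3/2; cos²φ) · cos φ.) -/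
open MeasureTheory Metric Real

private lemma sum_sq_le_iff_norm (m : ℕ) (x : EuclideanSpace ℝ (Fin m)) (r : ℝ) (hr : 0 ≤ r) :
    ‖x‖ ≤ r ↔ ∑ i, x i ^ 2 ≤ r ^ 2 := by
  rw [EuclideanSpace.norm_eq]
  have hsum : (∑ i, ‖x i‖ ^ 2) = ∑ i, x i ^ 2 := by
    simp [Real.norm_eq_abs, sq_abs]
  rw [hsum]
  constructor
  · intro hle
    have h1 : 0 ≤ ∑ i, x i ^ 2 := by positivity
    nlinarith [Real.sq_sqrt h1, Real.sqrt_nonneg (∑ i, x i ^ 2)]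
  · intro hle
    calc √(∑ i, x i ^ 2) ≤ √(r ^ 2) := Real.sqrt_le_sqrt hle
      _ = r := Real.sqrt_sq hr

private lemma pi_sum_sq_volume (m : ℕ) (hm : 1 ≤ m) (K : ℝ) :
    volume {y : Fin m → ℝ | ∑ i, y i ^ 2 ≤ K} =
      ENNReal.ofReal (Real.sqrt K ^ m * (Real.sqrt π ^ m / Real.Gamma ((m:ℝ) / 2 + 1))) := by
  have hmeas : MeasurableSet {y : Fin m → ℝ | ∑ i, y i ^ 2 ≤ K} :=
    measurableSet_le (by fun_prop) measurable_const
  rw [← (EuclideanSpace.volume_preserving_symm_measurableEquiv_toLp (Fin m)).measure_preimage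
    hmeas.nullMeasurableSet]
  have hpre : (MeasurableEquiv.toLp 2 (Fin m → ℝ)).symm ⁻¹' {y : Fin m → ℝ | ∑ i, y i ^ 2 ≤ K}
      = {x : EuclideanSpace ℝ (Fin m) | ∑ i, x i ^ 2 ≤ K} := rfl
  rw [hpre]
  rcases le_or_gt 0 K with hK | hK
  · have hset : {x : EuclideanSpace ℝ (Fin m) | ∑ i, x i ^ 2 ≤ K}
        = closedBall 0 (Real.sqrt K) := by
      ext x
      rw [mem_closedBall_zero_iff, Set.mem_setOf_eq,
        sum_sq_le_iff_norm m x _ (Real.sqrt_nonneg K), Real.sq_sqrt hK]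
    haveI : Nonempty (Fin m) := Fin.pos_iff_nonempty.mp (by omega)
    rw [hset, EuclideanSpace.volume_closedBall]
    rw [Fintype.card_fin, ← ENNReal.ofReal_pow (Real.sqrt_nonneg K),
      ← ENNReal.ofReal_mul (by positivity)]
  · have hset : {x : EuclideanSpace ℝ (Fin m) | ∑ i, x i ^ 2 ≤ K} = ∅ := by
      ext x
      simp only [Set.mem_setOf_eq, Set.mem_empty_iff_false, iff_false, not_le]
      have : (0:ℝ) ≤ ∑ i, x i ^ 2 := by positivity
      linarith
    rw [hset, measure_empty, Real.sqrt_eq_zero'.mpr hK.le,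
      zero_pow (by omega : m ≠ 0), zero_mul, ENNReal.ofReal_zero]

private lemma lens_canonical (m : ℕ) (hm : 1 ≤ m) (c : ℝ) (hc0 : 0 ≤ c) (hc1 : c < 1) :
    volume {x : EuclideanSpace ℝ (Fin (m+1)) | ∑ i, x i ^ 2 + 2 * c * |x 0| ≤ 1 - c ^ 2} =
      ENNReal.ofReal ((Real.sqrt π ^ m / Real.Gamma ((m:ℝ)/2 + 1)) *
        (2 * ∫ s in c..1, (1 - s ^ 2) ^ ((m:ℝ)/2))) := by
  set V : ℝ := Real.sqrt π ^ m / Real.Gamma ((m:ℝ)/2 + 1) with hV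
  have hV0 : 0 ≤ V := by
    have := Real.Gamma_pos_of_pos (show (0:ℝ) < (m:ℝ)/2 + 1 by positivity)
    positivity
  -- the slice function
  set g : ℝ → ℝ := fun t => Real.sqrt (1 - c ^ 2 - t ^ 2 - 2 * c * |t|) ^ m * V with hg
  have hKt : ∀ t : ℝ, 1 - c ^ 2 - t ^ 2 - 2 * c * |t| = 1 - (|t| + c) ^ 2 := by
    intro t; rw [add_sq, sq_abs]; ring
  have hgcont : Continuous g := by
    apply Continuous.mul _ continuous_const
    exact (Real.continuous_sqrt.comp (by fun_prop)).pow m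
  have hgzero : ∀ t : ℝ, 1 - c ^ 2 - t ^ 2 - 2 * c * |t| ≤ 0 → g t = 0 := by
    intro t ht
    simp only [hg, Real.sqrt_eq_zero'.mpr ht, zero_pow (by omega : m ≠ 0), zero_mul]
  have hgsupp : ∀ t : ℝ, t ∉ Set.Icc (-1:ℝ) 1 → g t = 0 := by
    intro t ht
    have h1 : 1 < |t| := by
      rw [Set.mem_Icc, ← abs_le] at ht; linarith [not_le.mp ht]
    apply hgzero
    rw [hKt]
    nlinarith [abs_nonneg t]
  have hgint : Integrable g := by
    exact hgcont.integrable_of_hasCompactSupport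
      (HasCompactSupport.intro isCompact_Icc hgsupp)
  have hgnn : ∀ t, 0 ≤ g t := fun t => by positivity
  -- step 1 : transfer to pi
  set T : Set (Fin (m+1) → ℝ) := {y | ∑ i, y i ^ 2 + 2 * c * |y 0| ≤ 1 - c ^ 2} with hT
  have hTmeas : MeasurableSet T := measurableSet_le (by fun_prop) measurable_const
  have h1 : volume {x : EuclideanSpace ℝ (Fin (m+1)) |
      ∑ i, x i ^ 2 + 2 * c * |x 0| ≤ 1 - c ^ 2} = volume T := by
    rw [← (EuclideanSpace.volume_preserving_symm_measurableEquiv_toLp (Fin (m+1))).measure_preimage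
      hTmeas.nullMeasurableSet]
    rfl
  rw [h1]
  -- step 2 : product structure
  set U : Set (ℝ × (Fin m → ℝ)) :=
    {p | p.1 ^ 2 + ∑ i, p.2 i ^ 2 + 2 * c * |p.1| ≤ 1 - c ^ 2} with hU
  have hUmeas : MeasurableSet U := measurableSet_le (by fun_prop) measurable_const
  have h2 : volume T = volume U := by
    rw [← (volume_preserving_piFinSuccAbove (fun _ : Fin (m+1) => ℝ) 0).measure_preimage
      hUmeas.nullMeasurableSet]
    congr 1
    ext y
    simp only [hT, hU, Set.mem_preimage, Set.mem_setOf_eq, MeasurableEquiv.piFinSuccAbove_apply]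
    rw [Fin.sum_univ_succAbove (fun i => y i ^ 2) 0]
    constructor <;> intro h <;> [skip; skip] <;> · convert h using 2 <;> rfl
  rw [h2, Measure.volume_eq_prod, Measure.prod_apply hUmeas]
  -- step 3 : compute the slices
  have h3 : ∀ t : ℝ, volume (Prod.mk t ⁻¹' U) = ENNReal.ofReal (g t) := by
    intro t
    have hset : Prod.mk t ⁻¹' U
        = {y : Fin m → ℝ | ∑ i, y i ^ 2 ≤ 1 - c ^ 2 - t ^ 2 - 2 * c * |t|} := by
      ext y
      simp only [hU, Set.mem_preimage, Set.mem_setOf_eq]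
      constructor <;> intro h <;> linarith
    rw [hset, pi_sum_sq_volume m hm _]
  simp only [h3]
  rw [← MeasureTheory.ofReal_integral_eq_lintegral_ofReal hgint
    (Filter.Eventually.of_forall hgnn)]
  congr 1
  have hsupp : Function.support g ⊆ Set.Icc (-1:ℝ) 1 := by
    intro t ht
    by_contra hmem
    exact ht (hgsupp t hmem)
  have e1 : ∫ t, g t = ∫ t in Set.Icc (-1:ℝ) 1, g t := by
    rw [← MeasureTheory.integral_indicator measurableSet_Icc,
      Set.indicator_eq_self.mpr hsupp]
  have e2 : ∫ t in Set.Icc (-1:ℝ) 1, g t = ∫ t in (-1:ℝ)..1, g t := by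
    rw [integral_Icc_eq_integral_Ioc, ← intervalIntegral.integral_of_le (by norm_num)]
  have hii : ∀ a b : ℝ, IntervalIntegrable g volume a b := fun a b =>
    hgcont.intervalIntegrable a b
  have e3 : ∫ t in (-1:ℝ)..1, g t = (∫ t in (-1:ℝ)..0, g t) + ∫ t in (0:ℝ)..1, g t :=
    (intervalIntegral.integral_add_adjacent_intervals (hii _ _) (hii _ _)).symm
  have e4 : ∫ t in (-1:ℝ)..0, g t = ∫ t in (0:ℝ)..1, g t := by
    have hneg := intervalIntegral.integral_comp_neg (a := (0:ℝ)) (b := (1:ℝ)) g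
    rw [neg_zero] at hneg
    rw [← hneg]
    apply intervalIntegral.integral_congr
    intro t _
    simp only [hg, abs_neg, neg_sq]
  have e5 : ∫ t in (0:ℝ)..1, g t = (∫ t in (0:ℝ)..(1-c), g t) + ∫ t in (1-c)..1, g t :=
    (intervalIntegral.integral_add_adjacent_intervals (hii _ _) (hii _ _)).symm
  have e6 : ∫ t in (1-c)..1, g t = 0 := by
    rw [intervalIntegral.integral_congr (g := fun _ => (0:ℝ)) ?_,
      intervalIntegral.integral_zero]
    intro t ht
    rw [Set.uIcc_of_le (by linarith)] at ht
    obtain ⟨ht1, ht2⟩ := ht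
    apply hgzero
    rw [hKt]
    nlinarith [le_abs_self t, abs_nonneg t]
  have e7 : ∫ t in (0:ℝ)..(1-c), g t
      = ∫ s in c..1, ((1 - s^2) ^ ((m:ℝ)/2) * V) := by
    have hcongr : ∫ t in (0:ℝ)..(1-c), g t
        = ∫ t in (0:ℝ)..(1-c), (1 - (t + c)^2) ^ ((m:ℝ)/2) * V := by
      apply intervalIntegral.integral_congr
      intro t ht
      rw [Set.uIcc_of_le (by linarith)] at ht
      obtain ⟨ht1, ht2⟩ := ht
      have habs : |t| = t := abs_of_nonneg ht1
      have hbase : (0:ℝ) ≤ 1 - (t + c)^2 := by nlinarith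
      simp only [hg]
      rw [hKt, habs]
      congr 1
      rw [Real.sqrt_eq_rpow, ← Real.rpow_natCast ((1-(t+c)^2) ^ ((1:ℝ)/2)) m,
        ← Real.rpow_mul hbase, show (1:ℝ)/2 * (m:ℝ) = (m:ℝ)/2 by ring]
    rw [hcongr]
    have hsub := intervalIntegral.integral_comp_add_right (a := (0:ℝ)) (b := 1 - c)
      (fun s => (1 - s^2) ^ ((m:ℝ)/2) * V) c
    simpa using hsub
  rw [e1, e2, e3, e4, e5, e6, e7, intervalIntegral.integral_mul_const]
  ring

set_option maxHeartbeats 1000000 in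
theorem lens_volume_dim_n (n : ℕ) (hn : 2 ≤ n) (φ : ℝ) (hφ₀ : 0 < φ) (hφ₂ : φ < π / 2)
    (a b : EuclideanSpace ℝ (Fin n)) (h : dist a b = 2 * Real.cos φ) :
    volume (closedBall a 1 ∩ closedBall b 1) =
      ENNReal.ofReal
        ((π ^ ((n : ℝ) / 2) / Real.Gamma (1 + (n : ℝ) / 2)) *
          (1 - (2 * Real.Gamma (1 + (n : ℝ) / 2) /
              (Real.sqrt π * Real.Gamma (((n : ℝ) + 1) / 2))) *
            ∫ t in (0 : ℝ)..(Real.cos φ), (1 - t ^ 2) ^ (((n : ℝ) - 1) / 2))) := by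
  obtain ⟨m, rfl⟩ : ∃ m, n = m + 1 := ⟨n - 1, by omega⟩
  have hm : 1 ≤ m := by omega
  set c : ℝ := Real.cos φ with hcdef
  have hc0 : 0 < c := Real.cos_pos_of_mem_Ioo ⟨by linarith [Real.pi_pos], hφ₂⟩
  have hc1 : c < 1 := by
    have h0 : Real.cos φ < Real.cos 0 := by
      apply Real.cos_lt_cos_of_nonneg_of_le_pi le_rfl (by linarith [Real.pi_pos]) hφ₀
    simpa using h0
  -- geometric reduction
  set v : EuclideanSpace ℝ (Fin (m+1)) := (2:ℝ)⁻¹ • (a - b) with hv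
  set w : EuclideanSpace ℝ (Fin (m+1)) :=
    c • EuclideanSpace.single (0 : Fin (m+1)) (1:ℝ) with hw
  have hnv : ‖v‖ = c := by
    rw [hv, norm_smul, ← dist_eq_norm, h]
    simp only [norm_inv, Real.norm_ofNat]
    rw [inv_mul_eq_div]
    ring
  have hnw : ‖w‖ = c := by
    rw [hw, norm_smul, EuclideanSpace.norm_single]
    simp [abs_of_nonneg hc0.le]
  set L := Submodule.reflection (Submodule.span ℝ {v - w})ᗮ with hL
  have hLv : L v = w := Submodule.reflection_sub (hnv.trans hnw.symm)
  set m0 : EuclideanSpace ℝ (Fin (m+1)) := (2:ℝ)⁻¹ • (a + b) with hm0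
  have hma : m0 + v = a := by rw [hm0, hv]; module
  have hmb : m0 - v = b := by rw [hm0, hv]; module
  set F : EuclideanSpace ℝ (Fin (m+1)) → EuclideanSpace ℝ (Fin (m+1)) :=
    fun x => L (x - m0) with hF
  have hFmp : MeasurePreserving F volume volume :=
    (L.measurePreserving).comp (measurePreserving_sub_right volume m0)
  have hset : closedBall a 1 ∩ closedBall b 1
      = F ⁻¹' (closedBall w 1 ∩ closedBall (-w) 1) := by
    ext x
    simp only [Set.mem_inter_iff, Set.mem_preimage, mem_closedBall, hF]
    rw [dist_eq_norm, dist_eq_norm, dist_eq_norm, dist_eq_norm]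
    have h1 : L (x - m0) - w = L (x - a) := by
      rw [← hLv, ← map_sub]
      congr 1
      rw [← hma]; abel
    have h2 : L (x - m0) - (-w) = L (x - b) := by
      rw [← hLv, sub_neg_eq_add, ← map_add]
      congr 1
      rw [← hmb]; abel
    rw [h1, h2, L.norm_map, L.norm_map]
  rw [hset, hFmp.measure_preimage
    ((measurableSet_closedBall.inter measurableSet_closedBall).nullMeasurableSet)]
  -- canonical lens as sublevel set
  have hSet2 : closedBall w 1 ∩ closedBall (-w) 1
      = {x : EuclideanSpace ℝ (Fin (m+1)) | ∑ i, x i ^ 2 + 2 * c * |x 0| ≤ 1 - c ^ 2} := by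
    ext x
    have hx2 : ‖x‖ ^ 2 = ∑ i, x i ^ 2 := by
      rw [EuclideanSpace.norm_eq, Real.sq_sqrt (by positivity)]
      simp [Real.norm_eq_abs, sq_abs]
    have hiw : (inner ℝ x w : ℝ) = c * x 0 := by
      rw [hw, real_inner_smul_right, EuclideanSpace.inner_single_right]
      simp [mul_comm]
    simp only [Set.mem_inter_iff, mem_closedBall, dist_eq_norm, Set.mem_setOf_eq,
      sub_neg_eq_add]
    have k1 : ‖x - w‖ ≤ 1 ↔ ‖x‖^2 - 2*(c * x 0) + c^2 ≤ 1 := by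
      rw [← pow_le_one_iff_of_nonneg (norm_nonneg (x - w)) two_ne_zero,
        norm_sub_sq_real, hiw, hnw]
    have k2 : ‖x + w‖ ≤ 1 ↔ ‖x‖^2 + 2*(c * x 0) + c^2 ≤ 1 := by
      rw [← pow_le_one_iff_of_nonneg (norm_nonneg (x + w)) two_ne_zero,
        norm_add_sq_real, hiw, hnw]
    rw [k1, k2, hx2]
    constructor
    · rintro ⟨ha1, ha2⟩
      rcases abs_cases (x 0) with ⟨he, _⟩ | ⟨he, _⟩ <;> rw [he] <;> linarith
    · intro hle
      have habs1 := le_abs_self (x 0)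
      have habs2 := neg_abs_le (x 0)
      constructor <;> nlinarith
  rw [hSet2, lens_canonical m hm c hc0.le hc1]
  -- ball volume identity : value of the full integral
  set G2 : ℝ := Real.Gamma ((m:ℝ)/2 + 1) with hG2
  have hG2pos : 0 < G2 := Real.Gamma_pos_of_pos (by positivity)
  set V : ℝ := Real.sqrt π ^ m / G2 with hVdef
  set A : ℝ := ∫ s in (0:ℝ)..1, (1 - s^2) ^ ((m:ℝ)/2) with hA
  set B : ℝ := ∫ s in (0:ℝ)..c, (1 - s^2) ^ ((m:ℝ)/2) with hB
  have hfcont : Continuous (fun s : ℝ => (1 - s^2) ^ ((m:ℝ)/2)) :=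
    Continuous.rpow_const (by fun_prop) (fun s => Or.inr (by positivity))
  have hsplit : (∫ s in c..1, (1-s^2)^((m:ℝ)/2)) = A - B := by
    rw [hA, hB, ← intervalIntegral.integral_add_adjacent_intervals
      (hfcont.intervalIntegrable 0 c) (hfcont.intervalIntegrable c 1)]
    ring
  set G1 : ℝ := Real.Gamma (((m:ℝ)+1)/2 + 1) with hG1
  have hG1pos : 0 < G1 := Real.Gamma_pos_of_pos (by positivity)
  have hball : Real.sqrt π ^ (m+1) / G1 = V * (2 * A) := by
    have hb2 : closedBall (0 : EuclideanSpace ℝ (Fin (m+1))) 1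
        = {x : EuclideanSpace ℝ (Fin (m+1)) | ∑ i, x i ^ 2 + 2 * 0 * |x 0| ≤ 1 - 0 ^ 2} := by
      ext x
      rw [mem_closedBall_zero_iff, Set.mem_setOf_eq,
        sum_sq_le_iff_norm _ x 1 zero_le_one]
      norm_num
    have hvol := lens_canonical m hm 0 le_rfl one_pos
    rw [← hb2, EuclideanSpace.volume_closedBall] at hvol
    simp only [Fintype.card_fin, ENNReal.ofReal_one, one_pow, one_mul] at hvol
    have harg : ((m+1:ℕ):ℝ)/2 + 1 = ((m:ℝ)+1)/2 + 1 := by push_cast; ring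
    rw [harg] at hvol
    have hnn1 : 0 ≤ Real.sqrt π ^ (m+1) / G1 := by positivity
    have hAnn : 0 ≤ A := by
      apply intervalIntegral.integral_nonneg (by norm_num)
      intro u hu
      apply Real.rpow_nonneg
      nlinarith [hu.1, hu.2]
    have hnn2 : 0 ≤ V * (2 * A) := by positivity
    rw [← hG1, ← hG2, ← hVdef, ← hA] at hvol
    exact (ENNReal.ofReal_eq_ofReal_iff hnn1 hnn2).mp hvol
  -- final algebra
  rw [hsplit]
  have hpi : π ^ (((m:ℝ)+1)/2) = Real.sqrt π ^ (m+1) := by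
    rw [Real.sqrt_eq_rpow, ← Real.rpow_natCast (π ^ ((1:ℝ)/2)) (m+1),
      ← Real.rpow_mul Real.pi_pos.le]
    congr 1
    push_cast; ring
  have hsqrtpi : (0:ℝ) < Real.sqrt π := Real.sqrt_pos.mpr Real.pi_pos
  have hcast1 : ((m+1:ℕ):ℝ) = (m:ℝ) + 1 := by push_cast; ring
  have hexp : (((m+1:ℕ):ℝ) - 1)/2 = (m:ℝ)/2 := by push_cast; ring
  have hargG1 : 1 + ((m+1:ℕ):ℝ)/2 = ((m:ℝ)+1)/2 + 1 := by push_cast; ring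
  have hargG2 : (((m+1:ℕ):ℝ) + 1)/2 = (m:ℝ)/2 + 1 := by push_cast; ring
  rw [hexp, hargG1, hargG2, ← hG1, ← hG2, ← hB, hcast1, hpi]
  congr 1
  have hPQ : (Real.sqrt π ^ (m+1) / G1) * (2 * G1 / (Real.sqrt π * G2)) = 2 * V := by
    rw [hVdef, pow_succ]
    field_simp
  linear_combination (-1 : ℝ) * hball + B * hPQ
end

section
/- Let ℓ ≥ 0 and let S ⊆ ℝ³ be a closed line segment of length ℓ (the segment joining two points p, q with dist p q = ℓ). Then the Lebesgue volume of the set {x ∈ ℝ³ : infDist x S ≤ 1} (the right circular cylinder of radius 1 and length ℓ with hemispherical ends) equals (ℓ + 4/3)·π. -/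
open MeasureTheory Metric Real

theorem disk_vol (r : ℝ) : (volume : Measure (Fin 2 → ℝ)) {y | (y 0)^2 + (y 1)^2 ≤ r} =
    ENNReal.ofReal (π * r) := by
  rcases lt_or_ge r 0 with hr | hr
  · have : {y : Fin 2 → ℝ | (y 0)^2 + (y 1)^2 ≤ r} = ∅ := by
      ext y; simp only [Set.mem_setOf_eq, Set.mem_empty_iff_false, iff_false, not_le]
      nlinarith [sq_nonneg (y 0), sq_nonneg (y 1)]
    rw [this, measure_empty, Eq.comm, ENNReal.ofReal_eq_zero]
    nlinarith [pi_pos]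
  · have hpre : (MeasurableEquiv.toLp 2 (Fin 2 → ℝ)).symm ⁻¹' {y : Fin 2 → ℝ | (y 0)^2 + (y 1)^2 ≤ r}
        = Metric.closedBall (0 : EuclideanSpace ℝ (Fin 2)) (sqrt r) := by
      ext x
      simp only [Set.mem_preimage, Set.mem_setOf_eq, Metric.mem_closedBall]
      rw [EuclideanSpace.dist_eq, Fin.sum_univ_two]
      simp only [PiLp.zero_apply, Real.dist_eq, sub_zero, sq_abs]
      rw [Real.sqrt_le_sqrt_iff hr]
      exact Iff.rfl
    have hm : MeasurableSet {y : Fin 2 → ℝ | (y 0)^2 + (y 1)^2 ≤ r} := by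
      apply measurableSet_le (by fun_prop) measurable_const
    rw [← (EuclideanSpace.volume_preserving_symm_measurableEquiv_toLp (Fin 2)).measure_preimage
      hm.nullMeasurableSet, hpre, EuclideanSpace.volume_closedBall]
    simp only [Fintype.card_fin]
    rw [show ((2:ℕ):ℝ)/2 + 1 = 2 by norm_num, Real.Gamma_two, div_one,
      Real.sq_sqrt pi_pos.le, ← ENNReal.ofReal_pow (Real.sqrt_nonneg _),
      Real.sq_sqrt hr, ← ENNReal.ofReal_mul hr, mul_comm]

theorem seg_eq (ℓ : ℝ) (hℓ : 0 ≤ ℓ) :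
    segment ℝ (0 : EuclideanSpace ℝ (Fin 3)) (EuclideanSpace.single 0 ℓ) =
      (fun t => EuclideanSpace.single (0 : Fin 3) t) '' Set.Icc 0 ℓ := by
  rw [segment_eq_image]
  have h1 : Set.Icc (0:ℝ) ℓ = (· * ℓ) '' Set.Icc 0 1 := by
    rw [Set.image_mul_right_Icc zero_le_one hℓ, zero_mul, one_mul]
  rw [h1, Set.image_image]
  apply Set.image_congr
  intro θ _
  ext j
  simp only [smul_zero, zero_add, PiLp.smul_apply, EuclideanSpace.single_apply, smul_eq_mul]
  split <;> ring

theorem dist_single (x : EuclideanSpace ℝ (Fin 3)) (t : ℝ) :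
    dist x (EuclideanSpace.single 0 t) = sqrt ((x 0 - t)^2 + (x 1)^2 + (x 2)^2) := by
  rw [EuclideanSpace.dist_eq, Fin.sum_univ_three]
  simp [EuclideanSpace.single_apply, Real.dist_eq, sq_abs]

theorem clamp_best (ℓ x u : ℝ) (hu : u ∈ Set.Icc 0 ℓ) :
    (x - max 0 (min x ℓ))^2 ≤ (x - u)^2 := by
  obtain ⟨h0, h1⟩ := hu
  rcases le_or_gt x 0 with h | h
  · rw [max_eq_left (by simp [min_le_iff]; left; exact h)]
    nlinarith
  rcases le_or_gt x ℓ with h' | h'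
  · rw [min_eq_left h', max_eq_right h.le]; simp; positivity
  · rw [min_eq_right h'.le, max_eq_right (le_trans h0 h1)]
    nlinarith

theorem my_sqrt_le_one {a : ℝ} : sqrt a ≤ 1 ↔ a ≤ 1 := by
  simpa using Real.sqrt_le_sqrt_iff (x := a) (y := 1) zero_le_one

theorem setA (ℓ : ℝ) (hℓ : 0 ≤ ℓ) :
    {x : EuclideanSpace ℝ (Fin 3) |
        infDist x (segment ℝ 0 (EuclideanSpace.single 0 ℓ)) ≤ 1} =
      {x : EuclideanSpace ℝ (Fin 3) |
        (x 0 - max 0 (min (x 0) ℓ))^2 + (x 1)^2 + (x 2)^2 ≤ 1} := by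
  ext x
  simp only [Set.mem_setOf_eq]
  set c : ℝ := max 0 (min (x 0) ℓ) with hc
  have hcmem : c ∈ Set.Icc 0 ℓ := ⟨le_max_left _ _, max_le hℓ (min_le_right _ _)⟩
  have hinf : infDist x (segment ℝ 0 (EuclideanSpace.single 0 ℓ))
      = sqrt ((x 0 - c)^2 + (x 1)^2 + (x 2)^2) := by
    rw [seg_eq ℓ hℓ]
    apply le_antisymm
    · rw [← dist_single]
      exact infDist_le_dist_of_mem ⟨c, hcmem, rfl⟩
    · by_contra hlt
      push_neg at hlt
      have hne : ((fun t => EuclideanSpace.single (0:Fin 3) t) '' Set.Icc 0 ℓ).Nonempty :=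
        ⟨_, Set.mem_image_of_mem _ (Set.mem_Icc.2 ⟨le_refl 0, hℓ⟩)⟩
      obtain ⟨y, hy, hylt⟩ := (infDist_lt_iff hne).1 hlt
      obtain ⟨u, hu, rfl⟩ := hy
      rw [dist_single] at hylt
      have h2 : sqrt ((x 0 - c)^2 + (x 1)^2 + (x 2)^2)
          ≤ sqrt ((x 0 - u)^2 + (x 1)^2 + (x 2)^2) := by
        apply Real.sqrt_le_sqrt
        have := clamp_best ℓ (x 0) u hu
        linarith
      linarith
  rw [hinf, my_sqrt_le_one]
theorem canonical_vol (ℓ : ℝ) (hℓ : 0 ≤ ℓ) :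
    volume {x : EuclideanSpace ℝ (Fin 3) |
        (x 0 - max 0 (min (x 0) ℓ))^2 + (x 1)^2 + (x 2)^2 ≤ 1} =
      ENNReal.ofReal ((ℓ + 4 / 3) * π) := by
  set g : ℝ → ℝ := fun t => (t - max 0 (min t ℓ))^2 with hgdef
  have hgc : Continuous g := by fun_prop
  set B : Set (ℝ × (Fin 2 → ℝ)) := {z | g z.1 + (z.2 0)^2 + (z.2 1)^2 ≤ 1} with hBdef
  have hBm : MeasurableSet B := by
    apply measurableSet_le _ measurable_const
    apply Measurable.add
    apply Measurable.add
    · exact (hgc.measurable).comp measurable_fst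
    · exact ((measurable_pi_apply 0).comp measurable_snd).pow_const 2
    · exact ((measurable_pi_apply 1).comp measurable_snd).pow_const 2
  set Api : Set (Fin 3 → ℝ) := {f | g (f 0) + (f 1)^2 + (f 2)^2 ≤ 1} with hApidef
  have hApim : MeasurableSet Api := by
    apply measurableSet_le _ measurable_const
    apply Measurable.add
    apply Measurable.add
    · exact (hgc.measurable).comp (measurable_pi_apply 0)
    · exact (measurable_pi_apply 1).pow_const 2
    · exact (measurable_pi_apply 2).pow_const 2
  -- step B : Euclidean -> pi
  have hB1 : volume {x : EuclideanSpace ℝ (Fin 3) |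
        (x 0 - max 0 (min (x 0) ℓ))^2 + (x 1)^2 + (x 2)^2 ≤ 1} = volume Api := by
    rw [← (EuclideanSpace.volume_preserving_symm_measurableEquiv_toLp (Fin 3)).measure_preimage
      hApim.nullMeasurableSet]
    rfl
  -- step C : pi -> prod
  have hC : volume Api = volume B := by
    rw [← (volume_preserving_piFinSuccAbove (fun _ : Fin 3 => ℝ) 0).measure_preimage
      hBm.nullMeasurableSet]
    congr 1
  rw [hB1, hC, Measure.volume_eq_prod, Measure.prod_apply hBm]
  -- step D : slices
  have hD : ∀ t : ℝ, volume (Prod.mk t ⁻¹' B) = ENNReal.ofReal (π * (1 - g t)) := by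
    intro t
    have : Prod.mk t ⁻¹' B = {y : Fin 2 → ℝ | (y 0)^2 + (y 1)^2 ≤ 1 - g t} := by
      ext y
      simp only [Set.mem_preimage, hBdef, Set.mem_setOf_eq]
      constructor <;> intro h <;> linarith
    rw [this, disk_vol]
  simp only [hD]
  set h : ℝ → ℝ := fun t => π * max 0 (1 - g t) with hhdef
  have hpt : ∀ t, ENNReal.ofReal (π * (1 - g t)) = ENNReal.ofReal (h t) := by
    intro t
    rcases le_or_gt (1 - g t) 0 with h0 | h0
    · rw [hhdef]; simp only [max_eq_left h0, mul_zero, ENNReal.ofReal_zero]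
      rw [ENNReal.ofReal_eq_zero]
      nlinarith [pi_pos]
    · rw [hhdef]; simp only [max_eq_right h0.le]
  simp_rw [hpt]
  have hhc : Continuous h := by fun_prop
  have hsupp0 : ∀ t ∉ Set.Ioc (-1 : ℝ) (ℓ+1), h t = 0 := by
    intro t ht
    simp only [Set.mem_Ioc, not_and_or, not_lt, not_le] at ht
    have hg1 : 1 - g t ≤ 0 := by
      rcases ht with ht | ht
      · have h1 : min t ℓ = t := min_eq_left (by linarith)
        have h2 : max 0 t = 0 := max_eq_left (by linarith)
        simp only [hgdef, h1, h2, sub_zero]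
        nlinarith
      · have h1 : min t ℓ = ℓ := min_eq_right (by linarith)
        have h2 : max 0 ℓ = ℓ := max_eq_right hℓ
        simp only [hgdef, h1, h2]
        nlinarith
    rw [hhdef]; simp only [max_eq_left hg1, mul_zero]
  have hcs : HasCompactSupport h :=
    HasCompactSupport.intro isCompact_Icc
      (fun t ht => hsupp0 t (fun hmem => ht (Set.Ioc_subset_Icc_self hmem)))
  have hint : Integrable h := hhc.integrable_of_hasCompactSupport hcs
  have hnn : ∀ t, 0 ≤ h t := fun t => mul_nonneg pi_pos.le (le_max_left _ _)
  rw [← MeasureTheory.ofReal_integral_eq_lintegral_ofReal hint (ae_of_all _ hnn)]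
  congr 1
  rw [← intervalIntegral.integral_eq_integral_of_support_subset
    (Function.support_subset_iff'.2 hsupp0)]
  have hii : ∀ a b : ℝ, IntervalIntegrable h volume a b := fun a b => hhc.intervalIntegrable a b
  rw [← intervalIntegral.integral_add_adjacent_intervals (hii (-1) 0) (hii 0 (ℓ+1)),
    ← intervalIntegral.integral_add_adjacent_intervals (hii 0 ℓ) (hii ℓ (ℓ+1))]
  have e1 : ∫ t in (-1 : ℝ)..0, h t = π * (2/3) := by
    have heq : Set.EqOn h (fun t => π - π * t^2) (Set.uIcc (-1 : ℝ) 0) := by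
      intro t htm
      rw [Set.uIcc_of_le (by norm_num)] at htm
      obtain ⟨ht1, ht2⟩ := htm
      have h1 : min t ℓ = t := min_eq_left (by linarith)
      have h2 : max 0 t = 0 := max_eq_left ht2
      have h3 : g t = t^2 := by simp [hgdef, h1, h2]
      have h4 : max 0 (1 - g t) = 1 - t^2 := by rw [h3]; exact max_eq_right (by nlinarith)
      simp only [hhdef, h4]; ring
    rw [intervalIntegral.integral_congr heq,
      intervalIntegral.integral_sub (g := fun x : ℝ => π * x ^ 2) intervalIntegrable_const
        ((continuous_const.mul (continuous_pow 2)).intervalIntegrable _ _),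
      intervalIntegral.integral_const, intervalIntegral.integral_const_mul,
      integral_pow]
    norm_num
    ring
  have e2 : ∫ t in (0 : ℝ)..ℓ, h t = ℓ * π := by
    have heq : Set.EqOn h (fun _ => π) (Set.uIcc (0 : ℝ) ℓ) := by
      intro t htm
      rw [Set.uIcc_of_le hℓ] at htm
      obtain ⟨ht1, ht2⟩ := htm
      have h1 : min t ℓ = t := min_eq_left ht2
      have h2 : max 0 t = t := max_eq_right ht1
      have h3 : g t = 0 := by simp [hgdef, h1, h2]
      simp [hhdef, h3]
    rw [intervalIntegral.integral_congr heq, intervalIntegral.integral_const, smul_eq_mul]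
    ring
  have e3 : ∫ t in ℓ..(ℓ+1 : ℝ), h t = π * (2/3) := by
    have heq : Set.EqOn h (fun t => π - π * (t - ℓ)^2) (Set.uIcc ℓ (ℓ+1)) := by
      intro t htm
      rw [Set.uIcc_of_le (by linarith)] at htm
      obtain ⟨ht1, ht2⟩ := htm
      have h1 : min t ℓ = ℓ := min_eq_right ht1
      have h2 : max 0 ℓ = ℓ := max_eq_right hℓ
      have h3 : g t = (t - ℓ)^2 := by simp [hgdef, h1, h2]
      have h4 : max 0 (1 - g t) = 1 - (t - ℓ)^2 := by rw [h3]; exact max_eq_right (by nlinarith)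
      simp only [hhdef, h4]; ring
    rw [intervalIntegral.integral_congr heq]
    have := intervalIntegral.integral_comp_sub_right (a := ℓ) (b := ℓ+1)
      (fun u => π - π * u^2) ℓ
    rw [this, show ℓ - ℓ = (0:ℝ) by ring, show ℓ + 1 - ℓ = (1:ℝ) by ring,
      intervalIntegral.integral_sub (g := fun x : ℝ => π * x ^ 2) intervalIntegrable_const
        ((continuous_const.mul (continuous_pow 2)).intervalIntegrable _ _),
      intervalIntegral.integral_const, intervalIntegral.integral_const_mul,
      integral_pow]
    norm_num
    ring
  rw [e1, e2, e3]
  ring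

theorem capsule_volume (ℓ : ℝ) (hℓ : 0 ≤ ℓ) (p q : EuclideanSpace ℝ (Fin 3))
    (h : dist p q = ℓ) :
    volume {x : EuclideanSpace ℝ (Fin 3) | infDist x (segment ℝ p q) ≤ 1} =
      ENNReal.ofReal ((ℓ + 4 / 3) * π) := by
  set v : EuclideanSpace ℝ (Fin 3) := EuclideanSpace.single 0 ℓ with hvdef
  have hnorm : ‖q - p‖ = ‖v‖ := by
    rw [hvdef, EuclideanSpace.norm_single, Real.norm_eq_abs, abs_of_nonneg hℓ,
      ← dist_eq_norm, dist_comm, h]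
  set R := Submodule.reflection (ℝ ∙ (q - p - v))ᗮ with hRdef
  have hRv : R (q - p) = v := Submodule.reflection_sub hnorm
  set T : EuclideanSpace ℝ (Fin 3) → EuclideanSpace ℝ (Fin 3) := fun x => R (x - p) with hTdef
  have hTmp : MeasurePreserving T :=
    R.measurePreserving.comp (measurePreserving_sub_right volume p)
  have hTiso : Isometry T := by
    apply Isometry.comp (R.isometry)
    exact Isometry.of_dist_eq (fun a b => by rw [dist_sub_right])
  have hTseg : T '' segment ℝ p q = segment ℝ 0 v := by
    set fA : EuclideanSpace ℝ (Fin 3) →ᵃ[ℝ] EuclideanSpace ℝ (Fin 3) :=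
      AffineMap.mk' T (R.toLinearEquiv.toLinearMap) p
        (fun x => by simp [hTdef]) with hfA
    have h1 : (fA : _ → _) = T := rfl
    have h2 : fA p = 0 := by
      show T p = 0
      rw [hTdef]; simp
    have h3 : fA q = v := by
      show T q = v
      rw [hTdef]
      exact hRv
    rw [← h1, image_segment, h2, h3]
  have hset : {x : EuclideanSpace ℝ (Fin 3) | infDist x (segment ℝ p q) ≤ 1}
      = T ⁻¹' {y : EuclideanSpace ℝ (Fin 3) | infDist y (segment ℝ 0 v) ≤ 1} := by
    ext x
    simp only [Set.mem_preimage, Set.mem_setOf_eq]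
    rw [← hTseg, infDist_image hTiso]
  have hm : MeasurableSet {y : EuclideanSpace ℝ (Fin 3) | infDist y (segment ℝ 0 v) ≤ 1} :=
    (isClosed_le (continuous_infDist_pt _) continuous_const).measurableSet
  rw [hset, hTmp.measure_preimage hm.nullMeasurableSet, setA ℓ hℓ, canonical_vol ℓ hℓ]
end
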